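/- Let λ ∈ ℂ*, α, β ∈ ℂ, and suppose M = ℂ[t] is a W(1)-module with L_{0,0}·f(t) = t f(t) such that [L_{i,m}, L_{j,n}]·v = L_{i,m}·L_{j,n}·v − L_{j,n}·L_{i,m}·v. Then for all i ∈ ℤ, m, k ∈ ℕ: L_{i,m}·t^k = ∑_{s=0}^{min(m,k)} s!·binom(m,s)·binom(k,s)·(t−i)^{k−s}·(L_{i,m−s}·1). -/
import Mathlib


open Polynomial

private lemma coeff_id (m k s : ℕ) :
    (s+1).factorial * m.choose (s+1) * (k+1).choose (s+1)
      = (s+1).factorial * m.choose (s+1) * k.choose (s+1)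
        + m * (s.factorial * (m-1).choose s * k.choose s) := by
  have h : m * (s.factorial * (m-1).choose s) = (s+1).factorial * m.choose (s+1) := by
    cases m with
    | zero => simp
    | succ n =>
        have := Nat.add_one_mul_choose_eq n s
        simp only [Nat.succ_sub_one]
        rw [Nat.factorial_succ]
        calc (n+1) * (s.factorial * n.choose s) = s.factorial * ((n+1) * n.choose s) := by ring
          _ = s.factorial * ((n+1).choose (s+1) * (s+1)) := by rw [this]
          _ = (s+1) * s.factorial * (n+1).choose (s+1) := by ring
  rw [Nat.choose_succ_succ k s]
  calc (s+1).factorial * m.choose (s+1) * (k.choose s + k.choose (s+1))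
      = (s+1).factorial * m.choose (s+1) * k.choose (s+1)
        + ((s+1).factorial * m.choose (s+1)) * k.choose s := by ring
    _ = _ := by rw [← h]; ring

/-- suppose `ρ i m` is the action of `L_{i,m}` of `W(1)` on `M = ℂ[t]`,
compatible with the bracket `[L_{i,m}, L_{j,n}] = (j-i)L_{i+j,m+n} + (m-n)L_{i+j,m+n-1}`,
and `L_{0,0}` acts by multiplication by `t`. Then
`L_{i,m}·t^k = ∑_{s=0}^{min(m,k)} s!·C(m,s)·C(k,s)·(t-i)^{k-s}·(L_{i,m-s}·1)`. -/
theorem stmt_12 (lam α β : ℂ) (hlam : lam ≠ 0)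
    (ρ : ℤ → ℕ → ℂ[X] →ₗ[ℂ] ℂ[X])
    (h00 : ∀ f : ℂ[X], ρ 0 0 f = X * f)
    (hbr : ∀ (i j : ℤ) (m n : ℕ) (v : ℂ[X]),
      ρ i m (ρ j n v) - ρ j n (ρ i m v) =
        ((j - i : ℤ) : ℂ) • ρ (i + j) (m + n) v +
          (((m : ℤ) - (n : ℤ) : ℤ) : ℂ) • ρ (i + j) (m + n - 1) v) :
    ∀ (i : ℤ) (m k : ℕ),
      ρ i m (X ^ k) = ∑ s ∈ Finset.range (min m k + 1),
        ((s.factorial * m.choose s * k.choose s : ℕ) : ℂ) •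
          ((X - C (i : ℂ)) ^ (k - s) * ρ i (m - s) 1) := by
  intro i m k
  have key : ∀ (m : ℕ) (v : ℂ[X]),
      ρ i m (X * v) = (X - C (i:ℂ)) * ρ i m v + (m:ℂ) • ρ i (m-1) v := by
    intro m v
    have h := hbr i 0 m 0 v
    rw [h00, h00] at h
    rw [smul_eq_C_mul, smul_eq_C_mul] at h
    rw [smul_eq_C_mul]
    push_cast at h ⊢
    simp only [map_sub, map_zero, zero_sub, map_neg, zero_add, add_zero, sub_zero] at h ⊢
    linear_combination h
  have main : ∀ (k m : ℕ), ρ i m (X ^ k) = ∑ s ∈ Finset.range (k+1),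
      ((s.factorial * m.choose s * k.choose s : ℕ) : ℂ) •
        ((X - C (i:ℂ)) ^ (k - s) * ρ i (m - s) 1) := by
    intro k
    induction k with
    | zero => intro m; simp
    | succ k ih =>
        intro m
        have e0 : (X : ℂ[X]) ^ (k+1) = X * X ^ k := by ring
        rw [e0, key m (X ^ k), ih m, ih (m-1)]
        -- E1 : (X - C i) * sum
        rw [Finset.mul_sum, Finset.smul_sum]
        -- rewrite each term of first sum
        have e1 : ∀ s ∈ Finset.range (k+1),
            (X - C (i:ℂ)) * (((s.factorial * m.choose s * k.choose s : ℕ) : ℂ) •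
              ((X - C (i:ℂ)) ^ (k - s) * ρ i (m - s) 1))
            = ((s.factorial * m.choose s * k.choose s : ℕ) : ℂ) •
              ((X - C (i:ℂ)) ^ (k + 1 - s) * ρ i (m - s) 1) := by
          intro s hs
          have hsk : s ≤ k := by simpa [Nat.lt_succ_iff] using hs
          rw [show k + 1 - s = (k - s) + 1 from by omega]
          rw [smul_eq_C_mul, smul_eq_C_mul]
          ring
        rw [Finset.sum_congr rfl e1]
        have e2 : ∀ s ∈ Finset.range (k+1),
            (m:ℂ) • (((s.factorial * (m-1).choose s * k.choose s : ℕ) : ℂ) •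
              ((X - C (i:ℂ)) ^ (k - s) * ρ i ((m-1) - s) 1))
            = ((m * (s.factorial * (m-1).choose s * k.choose s) : ℕ) : ℂ) •
              ((X - C (i:ℂ)) ^ (k - s) * ρ i (m - (s+1)) 1) := by
          intro s hs
          rw [show m - (s+1) = (m-1) - s from by omega, smul_smul]
          push_cast
          ring_nf
        rw [Finset.sum_congr rfl e2]
        -- extend first sum to range (k+2)
        have e3 : ∑ s ∈ Finset.range (k+1),
            ((s.factorial * m.choose s * k.choose s : ℕ) : ℂ) •
              ((X - C (i:ℂ)) ^ (k + 1 - s) * ρ i (m - s) 1)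
            = ∑ s ∈ Finset.range (k+2),
            ((s.factorial * m.choose s * k.choose s : ℕ) : ℂ) •
              ((X - C (i:ℂ)) ^ (k + 1 - s) * ρ i (m - s) 1) := by
          rw [Finset.sum_range_succ (n := k+1)]
          rw [Nat.choose_eq_zero_of_lt (by omega : k < k+1)]
          simp
        rw [e3]
        rw [show k + 1 + 1 = k + 2 from rfl]
        rw [Finset.sum_range_succ' (n := k+1) (f := fun s =>
            ((s.factorial * m.choose s * k.choose s : ℕ) : ℂ) •
              ((X - C (i:ℂ)) ^ (k + 1 - s) * ρ i (m - s) 1))]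
        rw [Finset.sum_range_succ' (n := k+1) (f := fun s =>
            ((s.factorial * m.choose s * (k+1).choose s : ℕ) : ℂ) •
              ((X - C (i:ℂ)) ^ (k + 1 - s) * ρ i (m - s) 1))]
        have e4 : ∀ s ∈ Finset.range (k+1),
            (((s+1).factorial * m.choose (s+1) * (k+1).choose (s+1) : ℕ) : ℂ) •
              ((X - C (i:ℂ)) ^ (k + 1 - (s+1)) * ρ i (m - (s+1)) 1)
            = (((s+1).factorial * m.choose (s+1) * k.choose (s+1) : ℕ) : ℂ) •
              ((X - C (i:ℂ)) ^ (k + 1 - (s+1)) * ρ i (m - (s+1)) 1)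
              + ((m * (s.factorial * (m-1).choose s * k.choose s) : ℕ) : ℂ) •
              ((X - C (i:ℂ)) ^ (k - s) * ρ i (m - (s+1)) 1) := by
          intro s hs
          rw [show k + 1 - (s+1) = k - s from by omega, coeff_id m k s]
          push_cast
          rw [add_smul]
        rw [Finset.sum_congr rfl e4, Finset.sum_add_distrib]
        simp
        ring
  rw [main k m]
  symm
  apply Finset.sum_subset
  · intro s hs
    simp only [Finset.mem_range] at hs ⊢
    omega
  · intro s hs hns
    simp only [Finset.mem_range] at hs hns
    have : m < s := by omega
    rw [Nat.choose_eq_zero_of_lt this]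
    simp
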